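/- High-probability Le Cam two-point lemma: let δ ∈ (0,1/2), and suppose θ₁,θ₂ ∈ Θ, P₁ ∈ 𝒫_{θ₁} and P₂ ∈ 𝒫_{θ₂} satisfy TV(P₁,P₂) < 1−2δ. Then, writing η := d(θ₁,θ₂)/2, the lower minimax quantile satisfies M_−(δ) ≥ g(η). -/

import Mathlib

open MeasureTheory ENNReal

/-- The lower minimax `(1-δ)`th quantile. -/
noncomputable def lowerMinimaxQuantile {Θ 𝒳 : Type*} [MeasurableSpace Θ] [MeasurableSpace 𝒳]
    (Pfam : Θ → Set (Measure 𝒳)) (L : Θ → Θ → ℝ) (δ : ℝ) : ℝ≥0∞ :=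
  sInf {r : ℝ≥0∞ |
    (⨅ T : {f : 𝒳 → Θ // Measurable f}, ⨆ θ : Θ, ⨆ P ∈ Pfam θ,
      P {x | r < ENNReal.ofReal (L (T.1 x) θ)}) ≤ ENNReal.ofReal δ}

/-- Total variation distance between two measures. -/
noncomputable def tvDist {𝒳 : Type*} [MeasurableSpace 𝒳] (P Q : Measure 𝒳) : ℝ :=
  ⨆ A : {A : Set 𝒳 // MeasurableSet A}, |(P A.1).toReal - (Q A.1).toReal|

/-- high-probability Le Cam two-point lemma. -/
theorem lowerMinimaxQuantile_ge_of_tvDist_lt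
    {Θ 𝒳 : Type*} [PseudoMetricSpace Θ] [Nonempty Θ] [MeasurableSpace Θ] [BorelSpace Θ]
    [MeasurableSpace 𝒳]
    (Pfam : Θ → Set (Measure 𝒳)) (hPfam : ∀ θ, ∀ P ∈ Pfam θ, IsProbabilityMeasure P)
    (g : ℝ → ℝ) (hg : MonotoneOn g (Set.Ici 0)) (hg0 : ∀ x ∈ Set.Ici (0 : ℝ), 0 ≤ g x)
    (δ : ℝ) (hδ : δ ∈ Set.Ioo (0 : ℝ) (1/2))
    (θ₁ θ₂ : Θ) (P₁ P₂ : Measure 𝒳) (hP₁ : P₁ ∈ Pfam θ₁) (hP₂ : P₂ ∈ Pfam θ₂)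
    (hTV : tvDist P₁ P₂ < 1 - 2 * δ) :
    ENNReal.ofReal (g (dist θ₁ θ₂ / 2)) ≤
      lowerMinimaxQuantile Pfam (fun a b => g (dist a b)) δ := by
  obtain ⟨hδ0, hδ1⟩ := hδ
  have hP₁p := hPfam θ₁ P₁ hP₁
  have hP₂p := hPfam θ₂ P₂ hP₂
  set η := dist θ₁ θ₂ / 2 with hηdef
  have hη0 : 0 ≤ η := by positivity
  set tv := tvDist P₁ P₂ with htvdef
  have htv0 : 0 ≤ tv := by
    have hbdd : BddAbove (Set.range fun A : {A : Set 𝒳 // MeasurableSet A} =>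
        |(P₁ A.1).toReal - (P₂ A.1).toReal|) := by
      refine ⟨2, ?_⟩
      rintro _ ⟨A, rfl⟩
      have h1 : (P₁ A.1).toReal ≤ 1 :=
        le_trans (ENNReal.toReal_mono one_ne_top prob_le_one) (by simp)
      have h2 : (P₂ A.1).toReal ≤ 1 :=
        le_trans (ENNReal.toReal_mono one_ne_top prob_le_one) (by simp)
      have h3 : 0 ≤ (P₁ A.1).toReal := ENNReal.toReal_nonneg
      have h4 : 0 ≤ (P₂ A.1).toReal := ENNReal.toReal_nonneg
      rw [abs_sub_le_iff]; constructor <;> linarith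
    have := le_ciSup hbdd (⟨∅, MeasurableSet.empty⟩ : {A : Set 𝒳 // MeasurableSet A})
    simp at this; exact this
  refine le_sInf fun r hr => ?_
  by_contra hlt
  push_neg at hlt
  -- hlt : r < ENNReal.ofReal (g η)
  have key : ∀ T : {f : 𝒳 → Θ // Measurable f},
      ENNReal.ofReal ((1 - tv) / 2) ≤ ⨆ θ : Θ, ⨆ P ∈ Pfam θ,
        P {x | r < ENNReal.ofReal (g (dist (T.1 x) θ))} := by
    intro T
    set B := {x | η ≤ dist (T.1 x) θ₁} with hBdef
    have hBm : MeasurableSet B := by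
      have hclosed : IsClosed {θ : Θ | η ≤ dist θ θ₁} :=
        isClosed_le continuous_const (continuous_id.dist continuous_const)
      exact T.2 hclosed.measurableSet
    have hsub1 : B ⊆ {x | r < ENNReal.ofReal (g (dist (T.1 x) θ₁))} := by
      intro x hx
      have hxd : η ≤ dist (T.1 x) θ₁ := hx
      have : g η ≤ g (dist (T.1 x) θ₁) :=
        hg (Set.mem_Ici.2 hη0) (Set.mem_Ici.2 dist_nonneg) hxd
      exact lt_of_lt_of_le hlt (ENNReal.ofReal_le_ofReal this)
    have hsub2 : Bᶜ ⊆ {x | r < ENNReal.ofReal (g (dist (T.1 x) θ₂))} := by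
      intro x hx
      have hxd : dist (T.1 x) θ₁ < η := lt_of_not_ge hx
      have htri : dist θ₁ θ₂ ≤ dist (T.1 x) θ₁ + dist (T.1 x) θ₂ := by
        have := dist_triangle θ₁ (T.1 x) θ₂
        rwa [dist_comm θ₁ (T.1 x)] at this
      have hxd2 : η ≤ dist (T.1 x) θ₂ := by
        have : dist θ₁ θ₂ = 2 * η := by rw [hηdef]; ring
        linarith
      have : g η ≤ g (dist (T.1 x) θ₂) :=
        hg (Set.mem_Ici.2 hη0) (Set.mem_Ici.2 dist_nonneg) hxd2
      exact lt_of_lt_of_le hlt (ENNReal.ofReal_le_ofReal this)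
    -- TV bound
    have hbdd : BddAbove (Set.range fun A : {A : Set 𝒳 // MeasurableSet A} =>
        |(P₁ A.1).toReal - (P₂ A.1).toReal|) := by
      refine ⟨2, ?_⟩
      rintro _ ⟨A, rfl⟩
      have h1 : (P₁ A.1).toReal ≤ 1 :=
        le_trans (ENNReal.toReal_mono one_ne_top prob_le_one) (by simp)
      have h2 : (P₂ A.1).toReal ≤ 1 :=
        le_trans (ENNReal.toReal_mono one_ne_top prob_le_one) (by simp)
      have h3 : 0 ≤ (P₁ A.1).toReal := ENNReal.toReal_nonneg
      have h4 : 0 ≤ (P₂ A.1).toReal := ENNReal.toReal_nonneg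
      rw [abs_sub_le_iff]; constructor <;> linarith
    have habs : |(P₁ B).toReal - (P₂ B).toReal| ≤ tv :=
      le_ciSup hbdd (⟨B, hBm⟩ : {A : Set 𝒳 // MeasurableSet A})
    set p := (P₁ B).toReal with hp
    set q := (P₂ Bᶜ).toReal with hq
    have hcompl : q = 1 - (P₂ B).toReal := by
      rw [hq, measure_compl hBm (measure_ne_top _ _), measure_univ,
        ENNReal.toReal_sub_of_le prob_le_one one_ne_top, ENNReal.toReal_one]
    have hpq : 1 - tv ≤ p + q := by
      have := abs_le.mp habs
      rw [hcompl]; linarith [this.1, this.2]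
    rcases le_total p q with hmax | hmax
    · -- use θ₂
      calc ENNReal.ofReal ((1 - tv) / 2) ≤ ENNReal.ofReal q :=
            ENNReal.ofReal_le_ofReal (by linarith)
        _ = P₂ Bᶜ := ENNReal.ofReal_toReal (measure_ne_top _ _)
        _ ≤ P₂ {x | r < ENNReal.ofReal (g (dist (T.1 x) θ₂))} := measure_mono hsub2
        _ ≤ _ := by
            refine le_iSup_of_le θ₂ ?_
            exact le_iSup₂ (f := fun P (_ : P ∈ Pfam θ₂) => P {x | r < ENNReal.ofReal (g (dist (T.1 x) θ₂))}) P₂ hP₂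
    · -- use θ₁
      calc ENNReal.ofReal ((1 - tv) / 2) ≤ ENNReal.ofReal p :=
            ENNReal.ofReal_le_ofReal (by linarith)
        _ = P₁ B := ENNReal.ofReal_toReal (measure_ne_top _ _)
        _ ≤ P₁ {x | r < ENNReal.ofReal (g (dist (T.1 x) θ₁))} := measure_mono hsub1
        _ ≤ _ := by
            refine le_iSup_of_le θ₁ ?_
            exact le_iSup₂ (f := fun P (_ : P ∈ Pfam θ₁) => P {x | r < ENNReal.ofReal (g (dist (T.1 x) θ₁))}) P₁ hP₁
  have hle : ENNReal.ofReal ((1 - tv) / 2) ≤ ENNReal.ofReal δ :=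
    le_trans (le_iInf key) hr
  have : (1 - tv) / 2 ≤ δ :=
    (ENNReal.ofReal_le_ofReal_iff (le_of_lt hδ0)).mp hle
  linarith
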